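/- Let (ε_t)_{t∈ℤ} be i.i.d. with mean zero and finite fourth moment, and let Y_t = Σ_{s=0}^∞ ψ_s ε_{t−s} be a linear process with Σ_{s=0}^∞ |ψ_s| < ∞. Then the normalized centered partial sums of lagged products are uniformly bounded in L²: sup over all n ≥ 1 and all integers k, l ≥ 1 of E| n^{−1/2} Σ_{t=1}^n ( Y_{t−k} Y_{t−l} − E[Y_{t−k} Y_{t−l}] ) |² is finite. -/

import Mathlib

open MeasureTheory Filter ProbabilityTheory
open scoped ENNReal NNReal

set_option linter.unusedSectionVars false
set_option maxHeartbeats 1000000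

noncomputable section

variable {Ω : Type*} [MeasurableSpace Ω]

/-- `arX Y t a ω = Σ_{k=1}^∞ a_k Y_{t-k}(ω)`; the index `k : ℕ` represents lag `k+1`. -/
def arX (Y : ℤ → Ω → ℝ) (t : ℤ) (a : ℕ → ℝ) (ω : Ω) : ℝ :=
  ∑' k : ℕ, a k * Y (t - 1 - (k : ℤ)) ω

/-- squared RKHS norm `Σ_k λ_k² b_k²`. -/
def eNormSq (L : ℕ → ℝ) (b : ℕ → ℝ) : ℝ := ∑' k : ℕ, (L k * b k) ^ 2

/-- RKHS norm `|b|_E`. -/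
def eNorm (L : ℕ → ℝ) (b : ℕ → ℝ) : ℝ := Real.sqrt (eNormSq L b)

/-- ℓ² norm `|b|₂`. -/
def l2Norm (b : ℕ → ℝ) : ℝ := Real.sqrt (∑' k : ℕ, (b k) ^ 2)

/-- membership in the ellipsoid `E_K(B)` (index `k : ℕ` is lag `k+1`, so `b_j = 0` for
`j > K` reads `b k = 0` for `k ≥ K`). -/
def memEKB (L : ℕ → ℝ) (K : ℕ) (B : ℝ) (b : ℕ → ℝ) : Prop :=
  Summable (fun k => (L k * b k) ^ 2) ∧ eNormSq L b ≤ B ^ 2 ∧ ∀ k, K ≤ k → b k = 0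

/-- membership in `E_K = ∪_B E_K(B)`. -/
def memEK (L : ℕ → ℝ) (K : ℕ) (b : ℕ → ℝ) : Prop :=
  Summable (fun k => (L k * b k) ^ 2) ∧ ∀ k, K ≤ k → b k = 0

/-- membership in `E(B)`. -/
def memEB (L : ℕ → ℝ) (B : ℝ) (b : ℕ → ℝ) : Prop :=
  Summable (fun k => (L k * b k) ^ 2) ∧ eNormSq L b ≤ B ^ 2

/-- membership in `E`. -/
def memE (L : ℕ → ℝ) (b : ℕ → ℝ) : Prop := Summable fun k => (L k * b k) ^ 2

/-- empirical least-squares loss `(1/n) Σ_{t=1}^n (Y_t − X_t(b))²`. -/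
def empLoss (Y : ℤ → Ω → ℝ) (n : ℕ) (b : ℕ → ℝ) (ω : Ω) : ℝ :=
  (1 / (n : ℝ)) * ∑ t ∈ Finset.range n, (Y (t + 1) ω - arX Y (t + 1) b ω) ^ 2

/-- penalized empirical loss. -/
def penLoss (Y : ℤ → Ω → ℝ) (L : ℕ → ℝ) (n : ℕ) (τ : ℝ) (b : ℕ → ℝ) (ω : Ω) : ℝ :=
  empLoss Y n b ω + τ * eNormSq L b

/-- population loss `E (Y₁ − X₁(b))²`. -/
def popLoss (μ : Measure Ω) (Y : ℤ → Ω → ℝ) (b : ℕ → ℝ) : ℝ :=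
  ∫ ω, (Y 1 ω - arX Y 1 b ω) ^ 2 ∂μ

/-- population penalized loss `E X₁(b−φ)² + τ |b|_E²`. -/
def popPenLoss (μ : Measure Ω) (Y : ℤ → Ω → ℝ) (L : ℕ → ℝ) (φ : ℕ → ℝ) (τ : ℝ)
    (b : ℕ → ℝ) : ℝ :=
  (∫ ω, (arX Y 1 (fun k => b k - φ k) ω) ^ 2 ∂μ) + τ * eNormSq L b

/-- `Z_n = O_p(a_n)`. -/
def IsBigOp (μ : Measure Ω) (Z : ℕ → Ω → ℝ) (a : ℕ → ℝ) : Prop :=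
  ∀ η : ℝ, 0 < η → ∃ M : ℝ, 0 < M ∧
    ∀ᶠ n in atTop, μ {ω | M * |a n| < |Z n ω|} ≤ ENNReal.ofReal η

/-- convergence to `0` in probability. -/
def TendstoInProb (μ : Measure Ω) (Z : ℕ → Ω → ℝ) : Prop :=
  ∀ η : ℝ, 0 < η → Tendsto (fun n => μ {ω | η < |Z n ω|}) atTop (nhds 0)

/-- Condition 1 of the paper. `φ k`, `L k` denote `φ_{k+1}`, `λ_{k+1}` (1-indexed). -/
structure Condition1 (μ : Measure Ω) (Y : ℤ → Ω → ℝ) (φ : ℕ → ℝ) (ε : ℤ → Ω → ℝ)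
    (L : ℕ → ℝ) (lam : ℝ) : Prop where
  lam_gt : 1 / 2 < lam
  L_pos : ∀ k, 0 < L k
  L_asymp : ∃ c₁ c₂ : ℝ, 0 < c₁ ∧ c₁ ≤ c₂ ∧ ∀ k : ℕ,
      c₁ * ((k : ℝ) + 1) ^ lam ≤ L k ∧ L k ≤ c₂ * ((k : ℝ) + 1) ^ lam
  meas_Y : ∀ t, Measurable (Y t)
  meas_eps : ∀ t, Measurable (ε t)
  phi_mem : memE L φ
  ar_eq : ∀ t : ℤ, ∀ᵐ ω ∂μ, Y t ω = arX Y t φ ω + ε t ω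
  no_roots : ∀ z : ℂ, ‖z‖ ≤ 1 → (1 : ℂ) - ∑' k : ℕ, (φ k : ℂ) * z ^ (k + 1) ≠ 0
  indep : iIndepFun ε μ
  ident : ∀ s t : ℤ, IdentDistrib (ε s) (ε t) μ μ
  mean_zero : ∀ t, ∫ ω, ε t ω ∂μ = 0
  fourth_moment : ∀ t, Integrable (fun ω => (ε t ω) ^ 4) μ
  sq_integrable : ∀ t, Integrable (fun ω => (Y t ω) ^ 2) μ
  stationary : ∀ (s : ℤ) (m : ℕ) (t : Fin m → ℤ),
      Measure.map (fun ω i => Y (t i + s) ω) μ = Measure.map (fun ω i => Y (t i) ω) μ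



lemma abs_mul4_le' (w x y z : ℝ) : |w * x * y * z| ≤ (w^4 + x^4 + y^4 + z^4)/4 := by
  have h1 : |w * x * y * z| = |w*x| * |y*z| := by
    rw [abs_mul (w*x*y) z, abs_mul (w*x) y, abs_mul w x, abs_mul y z]; ring
  have h2 : |w*x| ≤ (w^2 + x^2)/2 := by
    rw [abs_mul]; nlinarith [sq_nonneg (|w| - |x|), sq_abs w, sq_abs x]
  have h3 : |y*z| ≤ (y^2 + z^2)/2 := by
    rw [abs_mul]; nlinarith [sq_nonneg (|y| - |z|), sq_abs y, sq_abs z]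
  nlinarith [abs_nonneg (w*x), abs_nonneg (y*z), sq_nonneg (w^2 - x^2), sq_nonneg (y^2 - z^2),
    sq_nonneg (w^2 + x^2 - y^2 - z^2)]

lemma abs_mul2_le' (x y : ℝ) : |x * y| ≤ (x^2 + y^2)/2 := by
  rw [abs_mul]; nlinarith [sq_nonneg (|x| - |y|), sq_abs x, sq_abs y]

section Aux
variable {μ : Measure Ω} [IsProbabilityMeasure μ] {ε : ℤ → Ω → ℝ}
  (hmeas : ∀ t, Measurable (ε t))
  (hindep : iIndepFun ε μ)
  (hident : ∀ s t : ℤ, IdentDistrib (ε s) (ε t) μ μ)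
  (hmean : ∀ t, ∫ ω, ε t ω ∂μ = 0)
  (hfourth : ∀ t, Integrable (fun ω => (ε t ω) ^ 4) μ)

include hmeas hfourth in
lemma int_sq (t : ℤ) : Integrable (fun ω => (ε t ω)^2) μ := by
  refine Integrable.mono ((hfourth t).add (integrable_const 1))
    ((hmeas t).pow_const 2).aestronglyMeasurable (Eventually.of_forall fun ω => ?_)
  simp only [Pi.add_apply, Real.norm_eq_abs]
  rw [abs_of_nonneg (sq_nonneg (ε t ω)), abs_of_nonneg (by positivity : (0:ℝ) ≤ (ε t ω)^4 + 1)]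
  nlinarith [sq_nonneg ((ε t ω)^2 - 1)]

include hmeas hfourth in
lemma int_eps (t : ℤ) : Integrable (ε t) μ := by
  refine Integrable.mono ((int_sq hmeas hfourth t).add (integrable_const 1))
    (hmeas t).aestronglyMeasurable (Eventually.of_forall fun ω => ?_)
  simp only [Pi.add_apply, Real.norm_eq_abs]
  rw [abs_of_nonneg (by positivity : (0:ℝ) ≤ (ε t ω)^2 + 1)]
  nlinarith [sq_nonneg (|ε t ω| - 1), sq_abs (ε t ω), abs_nonneg (ε t ω)]

include hmeas hfourth in
lemma int_mul2 (u v : ℤ) : Integrable (fun ω => ε u ω * ε v ω) μ := by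
  refine Integrable.mono (((int_sq hmeas hfourth u).add (int_sq hmeas hfourth v)).div_const 2)
    ((hmeas u).mul (hmeas v)).aestronglyMeasurable (Eventually.of_forall fun ω => ?_)
  simp only [Pi.add_apply, Pi.div_apply, Real.norm_eq_abs]
  rw [abs_of_nonneg (by positivity : (0:ℝ) ≤ ((ε u ω)^2 + (ε v ω)^2)/2)]
  exact abs_mul2_le' _ _

include hmeas hfourth in
lemma int_mul4 (u v x y : ℤ) : Integrable (fun ω => ε u ω * ε v ω * (ε x ω * ε y ω)) μ := by
  refine Integrable.mono
    ((((hfourth u).add (hfourth v)).add ((hfourth x).add (hfourth y))).div_const 4)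
    (((hmeas u).mul (hmeas v)).mul ((hmeas x).mul (hmeas y))).aestronglyMeasurable
    (Eventually.of_forall fun ω => ?_)
  simp only [Pi.add_apply, Pi.div_apply, Real.norm_eq_abs]
  rw [abs_of_nonneg (by positivity : (0:ℝ) ≤ ((ε u ω)^4 + (ε v ω)^4 + ((ε x ω)^4 + (ε y ω)^4))/4)]
  calc |ε u ω * ε v ω * (ε x ω * ε y ω)| = |ε u ω * ε v ω * ε x ω * ε y ω| := by ring_nf
  _ ≤ ((ε u ω)^4 + (ε v ω)^4 + (ε x ω)^4 + (ε y ω)^4)/4 := abs_mul4_le' _ _ _ _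
  _ = _ := by ring

include hmeas hindep in
lemma indep_eval3 (w x y z : ℤ) (h1 : w ≠ x) (h2 : w ≠ y) (h3 : w ≠ z) :
    IndepFun (ε w) (fun ω => ε x ω * ε y ω * ε z ω) μ := by
  classical
  have hd : Disjoint ({w} : Finset ℤ) ({x, y, z} : Finset ℤ) := by
    simp [Finset.disjoint_left, h1, h2, h3]
  have H := hindep.indepFun_finset {w} {x, y, z} hd hmeas
  have hm1 : Measurable fun p : (({w} : Finset ℤ) → ℝ) =>
      p ⟨w, Finset.mem_singleton_self w⟩ := by fun_prop
  have hm2 : Measurable fun p : (({x, y, z} : Finset ℤ) → ℝ) =>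
      p ⟨x, by simp⟩ * p ⟨y, by simp⟩ * p ⟨z, by simp⟩ := by fun_prop
  exact H.comp hm1 hm2

include hmeas hindep hmean in
lemma int4_isolated (w x y z : ℤ) (h1 : w ≠ x) (h2 : w ≠ y) (h3 : w ≠ z) :
    ∫ ω, ε w ω * (ε x ω * ε y ω * ε z ω) ∂μ = 0 := by
  rw [(indep_eval3 hmeas hindep w x y z h1 h2 h3).integral_fun_mul_eq_mul_integral (hmeas w).aestronglyMeasurable
    (((hmeas x).mul (hmeas y)).mul (hmeas z)).aestronglyMeasurable, hmean w, zero_mul]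

include hmeas hident hfourth in
lemma var_ineq : (∫ ω, (ε 0 ω)^2 ∂μ)^2 ≤ ∫ ω, (ε 0 ω)^4 ∂μ := by
  set σ2 := ∫ ω, (ε 0 ω)^2 ∂μ with hσ2
  have h0 : (0:ℝ) ≤ ∫ ω, ((ε 0 ω)^2 - σ2)^2 ∂μ := integral_nonneg fun ω => sq_nonneg _
  have I1 : Integrable (fun ω => (ε 0 ω)^4 - (2*σ2) * (ε 0 ω)^2) μ :=
    (hfourth 0).sub ((int_sq hmeas hfourth 0).const_mul _)
  have hrw : (fun ω => ((ε 0 ω)^2 - σ2)^2)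
      = fun ω => ((ε 0 ω)^4 - (2*σ2) * (ε 0 ω)^2) + σ2^2 := funext fun ω => by ring
  rw [hrw, integral_add I1 (integrable_const _),
    integral_sub (hfourth 0) ((int_sq hmeas hfourth 0).const_mul _),
    integral_const_mul _ _, integral_const] at h0
  simp only [measure_univ, ENNReal.toReal_one, smul_eq_mul, one_mul, probReal_univ] at h0
  nlinarith [h0]

include hmeas hindep hident hmean hfourth in
lemma key_bound (u v : ℕ → ℤ)
    (huu : ∀ {t s : ℕ}, u t = u s → t = s) (hvv : ∀ {t s : ℕ}, v t = v s → t = s)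
    (hcase : (∀ t, u t = v t) ∨
      ((∀ t, u t ≠ v t) ∧ ∀ t s, u t = v s → v t = u s → t = s)) (n : ℕ) :
    ∫ ω, (∑ t ∈ Finset.range n, (ε (u t) ω * ε (v t) ω -
        ∫ ω', ε (u t) ω' * ε (v t) ω' ∂μ))^2 ∂μ ≤ n * ∫ ω, (ε 0 ω)^4 ∂μ := by
  classical
  have mom2 : ∀ d : ℤ, ∫ ω, (ε d ω)^2 ∂μ = ∫ ω, (ε 0 ω)^2 ∂μ :=
    fun d => ((hident d 0).sq).integral_eq
  have mom4 : ∀ d : ℤ, ∫ ω, (ε d ω)^4 ∂μ = ∫ ω, (ε 0 ω)^4 ∂μ :=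
    fun d => ((hident d 0).pow (n := 4)).integral_eq
  set m4 := ∫ ω, (ε 0 ω)^4 ∂μ with hm4
  set σ2 := ∫ ω, (ε 0 ω)^2 ∂μ with hσ2
  set e : ℕ → ℝ := fun t => ∫ ω', ε (u t) ω' * ε (v t) ω' ∂μ with he
  set W : ℕ → Ω → ℝ := fun t ω => ε (u t) ω * ε (v t) ω - e t with hWdef
  have hXint : ∀ t, Integrable (fun ω => ε (u t) ω * ε (v t) ω) μ :=
    fun t => int_mul2 hmeas hfourth _ _
  have hI4 : ∀ t s, Integrable
      (fun ω => ε (u t) ω * ε (v t) ω * (ε (u s) ω * ε (v s) ω)) μ :=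
    fun t s => int_mul4 hmeas hfourth _ _ _ _
  have hIc : ∀ (c : ℝ) (t : ℕ), Integrable (fun ω => c * (ε (u t) ω * ε (v t) ω)) μ :=
    fun c t => (hXint t).const_mul c
  have hImain : ∀ t s, Integrable (fun ω =>
      ε (u t) ω * ε (v t) ω * (ε (u s) ω * ε (v s) ω)
        - e s * (ε (u t) ω * ε (v t) ω) - e t * (ε (u s) ω * ε (v s) ω)) μ :=
    fun t s => ((hI4 t s).sub (hIc (e s) t)).sub (hIc (e t) s)
  have hWWint : ∀ t s, Integrable (fun ω => W t ω * W s ω) μ := by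
    intro t s
    have hrw : (fun ω => W t ω * W s ω) = fun ω =>
        (ε (u t) ω * ε (v t) ω * (ε (u s) ω * ε (v s) ω)
        - e s * (ε (u t) ω * ε (v t) ω) - e t * (ε (u s) ω * ε (v s) ω)) + e t * e s :=
      funext fun ω => by simp only [hWdef]; ring
    rw [hrw]
    exact (hImain t s).add (integrable_const _)
  have hint_prod : ∀ t s, ∫ ω, W t ω * W s ω ∂μ =
      (∫ ω, ε (u t) ω * ε (v t) ω * (ε (u s) ω * ε (v s) ω) ∂μ) - e t * e s := by
    intro t s
    have hrw : (fun ω => W t ω * W s ω) = fun ω =>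
        (ε (u t) ω * ε (v t) ω * (ε (u s) ω * ε (v s) ω)
        - e s * (ε (u t) ω * ε (v t) ω) - e t * (ε (u s) ω * ε (v s) ω)) + e t * e s :=
      funext fun ω => by simp only [hWdef]; ring
    have hIa : Integrable (fun ω => ε (u t) ω * ε (v t) ω * (ε (u s) ω * ε (v s) ω)
        - e s * (ε (u t) ω * ε (v t) ω)) μ := (hI4 t s).sub (hIc (e s) t)
    rw [hrw, integral_add (hImain t s) (integrable_const _),
      integral_sub hIa (hIc (e t) s),
      integral_sub (hI4 t s) (hIc (e s) t),
      integral_const_mul _ _, integral_const_mul _ _, integral_const]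
    have h1 : ∫ ω, ε (u t) ω * ε (v t) ω ∂μ = e t := rfl
    have h2 : ∫ ω, ε (u s) ω * ε (v s) ω ∂μ = e s := rfl
    rw [h1, h2]
    simp only [measure_univ, ENNReal.toReal_one, smul_eq_mul, one_mul, probReal_univ]
    ring
  have hoff : ∀ t s, t ≠ s → ∫ ω, W t ω * W s ω ∂μ = 0 := by
    intro t s hts
    rw [hint_prod]
    rcases hcase with hEq | ⟨hne, hcr⟩
    · have hIs : IndepFun (fun ω => (ε (u t) ω)^2) (fun ω => (ε (u s) ω)^2) μ :=
        (hindep.indepFun fun h => hts (huu h)).comp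
          (measurable_id.pow_const 2) (measurable_id.pow_const 2)
      have hrw1 : (fun ω => ε (u t) ω * ε (v t) ω * (ε (u s) ω * ε (v s) ω))
          = fun ω => (ε (u t) ω)^2 * (ε (u s) ω)^2 := by
        funext ω; rw [← hEq t, ← hEq s]; ring
      have hrw2 : e t = ∫ ω, (ε (u t) ω)^2 ∂μ :=
        integral_congr_ae (Eventually.of_forall fun ω => by rw [← hEq t]; ring)
      have hrw3 : e s = ∫ ω, (ε (u s) ω)^2 ∂μ :=
        integral_congr_ae (Eventually.of_forall fun ω => by rw [← hEq s]; ring)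
      rw [hrw1, hIs.integral_fun_mul_eq_mul_integral ((hmeas _).pow_const 2).aestronglyMeasurable
        ((hmeas _).pow_const 2).aestronglyMeasurable, hrw2, hrw3, sub_self]
    · have het : e t = 0 := by
        have := (hindep.indepFun (hne t)).integral_fun_mul_eq_mul_integral (hmeas (u t)).aestronglyMeasurable
          (hmeas (v t)).aestronglyMeasurable
        rw [hmean, zero_mul] at this
        exact this
      have hXX0 : ∫ ω, ε (u t) ω * ε (v t) ω * (ε (u s) ω * ε (v s) ω) ∂μ = 0 := by
        by_cases h4 : u t = v s
        · have hvu : v t ≠ u s := fun hc => hts (hcr t s h4 hc)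
          have hrw : (fun ω => ε (u t) ω * ε (v t) ω * (ε (u s) ω * ε (v s) ω))
              = fun ω => ε (v t) ω * (ε (u t) ω * ε (u s) ω * ε (v s) ω) :=
            funext fun ω => by ring
          rw [hrw]
          exact int4_isolated hmeas hindep hmean _ _ _ _ (Ne.symm (hne t)) hvu
            (fun h => hts (hvv h))
        · have hrw : (fun ω => ε (u t) ω * ε (v t) ω * (ε (u s) ω * ε (v s) ω))
              = fun ω => ε (u t) ω * (ε (v t) ω * ε (u s) ω * ε (v s) ω) :=
            funext fun ω => by ring
          rw [hrw]
          exact int4_isolated hmeas hindep hmean _ _ _ _ (hne t)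
            (fun h => hts (huu h)) h4
      rw [hXX0, het, zero_mul, sub_zero]
  have hdiag : ∀ t, ∫ ω, W t ω * W t ω ∂μ ≤ m4 := by
    intro t
    rw [hint_prod]
    have hXX : ∫ ω, ε (u t) ω * ε (v t) ω * (ε (u t) ω * ε (v t) ω) ∂μ ≤ m4 := by
      by_cases h : u t = v t
      · have hrw : (fun ω => ε (u t) ω * ε (v t) ω * (ε (u t) ω * ε (v t) ω))
            = fun ω => (ε (u t) ω)^4 := by funext ω; rw [← h]; ring
        rw [hrw, mom4]
      · have hI : IndepFun (fun ω => (ε (u t) ω)^2) (fun ω => (ε (v t) ω)^2) μ :=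
          (hindep.indepFun h).comp (measurable_id.pow_const 2) (measurable_id.pow_const 2)
        have hrw : (fun ω => ε (u t) ω * ε (v t) ω * (ε (u t) ω * ε (v t) ω))
            = fun ω => (ε (u t) ω)^2 * (ε (v t) ω)^2 := funext fun ω => by ring
        rw [hrw, hI.integral_fun_mul_eq_mul_integral ((hmeas _).pow_const 2).aestronglyMeasurable
          ((hmeas _).pow_const 2).aestronglyMeasurable, mom2, mom2, ← sq]
        exact var_ineq hmeas hident hfourth
    nlinarith [sq_nonneg (e t)]
  have expand : (fun ω => (∑ t ∈ Finset.range n, W t ω)^2)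
      = fun ω => ∑ t ∈ Finset.range n, ∑ s ∈ Finset.range n, W t ω * W s ω :=
    funext fun ω => by rw [sq, Finset.sum_mul_sum]
  show ∫ ω, (∑ t ∈ Finset.range n, W t ω)^2 ∂μ ≤ n * m4
  rw [expand, integral_finset_sum _ fun t _ => integrable_finset_sum _ fun s _ => hWWint t s]
  calc ∑ t ∈ Finset.range n, ∫ ω, ∑ s ∈ Finset.range n, W t ω * W s ω ∂μ
      = ∑ t ∈ Finset.range n, ∑ s ∈ Finset.range n, ∫ ω, W t ω * W s ω ∂μ :=
        Finset.sum_congr rfl fun t _ => integral_finset_sum _ fun s _ => hWWint t s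
    _ = ∑ t ∈ Finset.range n, ∫ ω, W t ω * W t ω ∂μ := by
        refine Finset.sum_congr rfl fun t ht => ?_
        exact Finset.sum_eq_single t (fun s _ hst => hoff t s fun h => hst h.symm)
          (fun h => absurd ht h)
    _ ≤ ∑ _t ∈ Finset.range n, m4 := Finset.sum_le_sum fun t _ => hdiag t
    _ = n * m4 := by simp [Finset.sum_const, nsmul_eq_mul]

end Aux

section Aux2
variable {μ : Measure Ω} [IsProbabilityMeasure μ]

lemma lp_norm_sq (F : Lp ℝ 2 μ) : ∫ ω, (F ω)^2 ∂μ = ‖F‖^2 := by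
  have h := L2.inner_def (𝕜 := ℝ) F F
  rw [real_inner_self_eq_norm_sq] at h
  rw [h]
  refine integral_congr_ae (Eventually.of_forall fun ω => ?_)
  simp [RCLike.inner_apply, sq]

lemma coeFn_finset_sum {ι : Type*} (s : Finset ι) (G : ι → Lp ℝ 2 μ) :
    (⇑(∑ i ∈ s, G i) : Ω → ℝ) =ᵐ[μ] fun ω => ∑ i ∈ s, G i ω := by
  classical
  induction s using Finset.induction_on with
  | empty => simp only [Finset.sum_empty]; exact Lp.coeFn_zero _ _ _
  | insert a s' hx ih =>
      rw [Finset.sum_insert hx]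
      refine (Lp.coeFn_add _ _).trans ?_
      filter_upwards [ih] with ω hω
      simp only [Pi.add_apply, hω, Finset.sum_insert hx]

lemma sq_integral_sum_le {ι : Type*} (s : Finset ι) (g : ι → Ω → ℝ)
    (hg : ∀ i, MemLp (g i) 2 μ) :
    ∫ ω, (∑ i ∈ s, g i ω)^2 ∂μ ≤ (∑ i ∈ s, Real.sqrt (∫ ω, (g i ω)^2 ∂μ))^2 := by
  classical
  set G : ι → Lp ℝ 2 μ := fun i => (hg i).toLp (g i) with hG
  have hae : (⇑(∑ i ∈ s, G i) : Ω → ℝ) =ᵐ[μ] fun ω => ∑ i ∈ s, g i ω := by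
    refine (coeFn_finset_sum s G).trans ?_
    have h : ∀ᵐ ω ∂μ, ∀ i ∈ s, G i ω = g i ω :=
      (ae_ball_iff s.countable_toSet).2 fun i _ => (hg i).coeFn_toLp
    filter_upwards [h] with ω hω
    exact Finset.sum_congr rfl fun i hi => hω i hi
  have h1 : ∫ ω, (∑ i ∈ s, g i ω)^2 ∂μ = ‖∑ i ∈ s, G i‖^2 := by
    rw [← lp_norm_sq]
    refine integral_congr_ae ?_
    filter_upwards [hae] with ω h
    rw [h]
  have h3 : ∀ i, ‖G i‖ = Real.sqrt (∫ ω, (g i ω)^2 ∂μ) := by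
    intro i
    have : ∫ ω, (G i ω)^2 ∂μ = ∫ ω, (g i ω)^2 ∂μ := by
      refine integral_congr_ae ?_
      filter_upwards [(hg i).coeFn_toLp] with ω h
      show (G i ω)^2 = (g i ω)^2
      rw [show G i ω = g i ω from h]
    rw [← this, lp_norm_sq, Real.sqrt_sq (norm_nonneg _)]
  rw [h1]
  have h2 : ‖∑ i ∈ s, G i‖ ≤ ∑ i ∈ s, Real.sqrt (∫ ω, (g i ω)^2 ∂μ) := by
    refine (norm_sum_le s G).trans_eq (Finset.sum_congr rfl fun i _ => h3 i)
  exact pow_le_pow_left₀ (norm_nonneg _) h2 2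

lemma tendsto_sq_finsets :
    Tendsto (fun m : ℕ => Finset.range m ×ˢ Finset.range m) atTop atTop := by
  refine tendsto_atTop_finset_of_monotone ?_ ?_
  · intro a b hab
    exact Finset.product_subset_product (Finset.range_subset_range.2 hab) (Finset.range_subset_range.2 hab)
  · intro p
    exact ⟨max p.1 p.2 + 1, Finset.mem_product.2
      ⟨Finset.mem_range.2 (Nat.lt_succ_of_le (le_max_left _ _)),
       Finset.mem_range.2 (Nat.lt_succ_of_le (le_max_right _ _))⟩⟩

variable {ε : ℤ → Ω → ℝ} {ψ : ℕ → ℝ}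
  (hmeas : ∀ t, Measurable (ε t))
  (hident : ∀ s t : ℤ, IdentDistrib (ε s) (ε t) μ μ)
  (hfourth : ∀ t, Integrable (fun ω => (ε t ω) ^ 4) μ)
  (hψ : Summable fun s => |ψ s|)

include hmeas hident hfourth hψ in
lemma ae_summable_family :
    ∀ᵐ ω ∂μ, ∀ c : ℤ, Summable (fun i : ℕ => ‖ψ i * ε (c - i) ω‖) := by
  rw [ae_all_iff]
  intro c
  have hψn : Summable fun i => ‖ψ i‖₊ := by
    rw [← NNReal.summable_coe]
    simpa [coe_nnnorm, Real.norm_eq_abs] using hψ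
  have hAfin : ∫⁻ ω, (‖ε 0 ω‖₊ : ℝ≥0∞) ∂μ < ⊤ := (int_eps hmeas hfourth 0).2
  have heq : ∀ d : ℤ, ∫⁻ ω, (‖ε d ω‖₊ : ℝ≥0∞) ∂μ = ∫⁻ ω, (‖ε 0 ω‖₊ : ℝ≥0∞) ∂μ :=
    fun d => ((hident d 0).nnnorm.coe_nnreal_ennreal).lintegral_eq
  have hfin : ∫⁻ ω, ∑' i : ℕ, (‖ψ i * ε (c - i) ω‖₊ : ℝ≥0∞) ∂μ ≠ ⊤ := by
    rw [lintegral_tsum fun i : ℕ => ((hmeas (c - (i:ℤ))).const_mul (ψ i)).nnnorm.coe_nnreal_ennreal.aemeasurable]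
    have hterm : ∀ i : ℕ, ∫⁻ ω, (‖ψ i * ε (c - i) ω‖₊ : ℝ≥0∞) ∂μ
        = (‖ψ i‖₊ : ℝ≥0∞) * ∫⁻ ω, (‖ε 0 ω‖₊ : ℝ≥0∞) ∂μ := by
      intro i
      rw [← heq (c - i), ← lintegral_const_mul _ (hmeas (c - i)).nnnorm.coe_nnreal_ennreal]
      congr 1; funext ω; rw [nnnorm_mul]; push_cast; ring
    simp_rw [hterm]
    rw [ENNReal.tsum_mul_right]
    exact ENNReal.mul_ne_top (ENNReal.tsum_coe_ne_top_iff_summable.2 hψn) hAfin.ne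
  have hmeas' : Measurable fun ω => ∑' i : ℕ, (‖ψ i * ε (c - i) ω‖₊ : ℝ≥0∞) :=
    Measurable.ennreal_tsum fun i =>
      ((hmeas (c - i)).const_mul (ψ i)).nnnorm.coe_nnreal_ennreal
  filter_upwards [ae_lt_top hmeas' hfin] with ω hω
  have : Summable fun i : ℕ => ‖ψ i * ε (c - i) ω‖₊ :=
    ENNReal.tsum_coe_ne_top_iff_summable.1 hω.ne
  rw [← NNReal.summable_coe] at this
  simpa [coe_nnnorm] using this

end Aux2


/-- Lemma 4: for a linear process with i.i.d. innovations with mean zero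
and finite fourth moment and `Σ|ψ_s| < ∞`, the normalized centered partial sums of lagged
products are uniformly bounded in `L²`, over all `n ≥ 1` and lags `k, l ≥ 1`. -/
theorem lagged_products_L2_bound
    (μ : Measure Ω) [IsProbabilityMeasure μ]
    (ε : ℤ → Ω → ℝ) (ψ : ℕ → ℝ)
    (hmeas : ∀ t, Measurable (ε t))
    (hindep : iIndepFun ε μ)
    (hident : ∀ s t : ℤ, IdentDistrib (ε s) (ε t) μ μ)
    (hmean : ∀ t, ∫ ω, ε t ω ∂μ = 0)
    (hfourth : ∀ t, Integrable (fun ω => (ε t ω) ^ 4) μ)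
    (hψ : Summable fun s => |ψ s|)
    (Y : ℤ → Ω → ℝ) (hY : ∀ t ω, Y t ω = ∑' s : ℕ, ψ s * ε (t - (s : ℤ)) ω) :
    ∃ C : ℝ, ∀ n : ℕ, 1 ≤ n → ∀ k l : ℤ, 1 ≤ k → 1 ≤ l →
      ∫ ω, ((n : ℝ) ^ (-(1 / 2 : ℝ)) * ∑ t ∈ Finset.range n,
          (Y ((t : ℤ) + 1 - k) ω * Y ((t : ℤ) + 1 - l) ω -
            ∫ ω', Y ((t : ℤ) + 1 - k) ω' * Y ((t : ℤ) + 1 - l) ω' ∂μ)) ^ 2 ∂μ ≤ C := by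
  classical
  set m4 := ∫ ω, (ε 0 ω)^4 ∂μ with hm4def
  set σ2 := ∫ ω, (ε 0 ω)^2 ∂μ with hσ2def
  set Ψ := ∑' s : ℕ, |ψ s| with hΨdef
  have hm40 : 0 ≤ m4 := integral_nonneg fun ω => by positivity
  have hΨ0 : 0 ≤ Ψ := tsum_nonneg fun s => abs_nonneg _
  have hσ20 : 0 ≤ σ2 := integral_nonneg fun ω => sq_nonneg _
  have mom2 : ∀ d : ℤ, ∫ ω, (ε d ω)^2 ∂μ = σ2 := fun d => ((hident d 0).sq).integral_eq
  have habs2 : ∀ u v : ℤ, ∫ ω, |ε u ω * ε v ω| ∂μ ≤ σ2 := by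
    intro u v
    have h1 : Integrable (fun ω => |ε u ω * ε v ω|) μ := (int_mul2 hmeas hfourth u v).abs
    have h2 : Integrable (fun ω => ((ε u ω)^2 + (ε v ω)^2)/2) μ :=
      ((int_sq hmeas hfourth u).add (int_sq hmeas hfourth v)).div_const 2
    calc ∫ ω, |ε u ω * ε v ω| ∂μ ≤ ∫ ω, ((ε u ω)^2 + (ε v ω)^2)/2 ∂μ :=
        integral_mono h1 h2 fun ω => abs_mul2_le' _ _
    _ = ((∫ ω, (ε u ω)^2 ∂μ) + ∫ ω, (ε v ω)^2 ∂μ)/2 := by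
        rw [integral_div, integral_add (int_sq hmeas hfourth u) (int_sq hmeas hfourth v)]
    _ = σ2 := by rw [mom2, mom2]; ring
  have habsE : ∀ u v : ℤ, |∫ ω, ε u ω * ε v ω ∂μ| ≤ σ2 := by
    intro u v
    refine le_trans ?_ (habs2 u v)
    have h := norm_integral_le_integral_norm (fun ω => ε u ω * ε v ω) (μ := μ)
    simp only [Real.norm_eq_abs] at h
    exact h
  refine ⟨Ψ^4 * m4, fun n hn k l hk hl => ?_⟩
  have hsummable := ae_summable_family (μ := μ) hmeas hident hfourth hψ
  set E : ℕ × ℕ → ℕ → ℝ :=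
    fun p t => ∫ ω', ε ((t:ℤ)+1-k-p.1) ω' * ε ((t:ℤ)+1-l-p.2) ω' ∂μ with hEdef
  set g : ℕ × ℕ → Ω → ℝ := fun p ω => ∑ t ∈ Finset.range n,
      (ε ((t:ℤ)+1-k-p.1) ω * ε ((t:ℤ)+1-l-p.2) ω - E p t) with hgdef
  set f : ℕ × ℕ → Ω → ℝ := fun p ω => ψ p.1 * ψ p.2 * g p ω with hfdef
  set c : ℕ → ℝ := fun t => ∫ ω', Y ((t:ℤ)+1-k) ω' * Y ((t:ℤ)+1-l) ω' ∂μ with hcdef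
  set S : Ω → ℝ := fun ω => ∑ t ∈ Finset.range n,
      (Y ((t:ℤ)+1-k) ω * Y ((t:ℤ)+1-l) ω - c t) with hSdef
  -- L² bound for each g p
  have hgbound : ∀ p : ℕ×ℕ, ∫ ω, (g p ω)^2 ∂μ ≤ n * m4 := by
    intro p
    have hcase : (∀ t : ℕ, (t:ℤ)+1-k-p.1 = (t:ℤ)+1-l-p.2) ∨
        ((∀ t : ℕ, (t:ℤ)+1-k-p.1 ≠ (t:ℤ)+1-l-p.2) ∧
          ∀ t s : ℕ, (t:ℤ)+1-k-p.1 = (s:ℤ)+1-l-p.2 →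
            (t:ℤ)+1-l-p.2 = (s:ℤ)+1-k-p.1 → t = s) := by
      by_cases hkl : (k:ℤ) + p.1 = l + p.2
      · exact Or.inl fun t => by omega
      · exact Or.inr ⟨fun t h => hkl (by omega), fun t s h1 h2 => by omega⟩
    exact key_bound hmeas hindep hident hmean hfourth
      (fun t => (t:ℤ)+1-k-p.1) (fun t => (t:ℤ)+1-l-p.2)
      (fun {t s} h => by
        have h' : (t:ℤ)+1-k-p.1 = (s:ℤ)+1-k-p.1 := h
        omega)
      (fun {t s} h => by
        have h' : (t:ℤ)+1-l-p.2 = (s:ℤ)+1-l-p.2 := h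
        omega) hcase n
  have hgmeas : ∀ p, Measurable (g p) := fun p =>
    Finset.measurable_sum _ fun t _ => ((hmeas _).mul (hmeas _)).sub measurable_const
  have hfmeas : ∀ p, Measurable (f p) := fun p => (hgmeas p).const_mul _
  have hgLp : ∀ p, MemLp (g p) 2 μ := by
    intro p
    refine memLp_finset_sum _ fun t _ => ?_
    have hmul : MemLp (fun ω => ε ((t:ℤ)+1-k-p.1) ω * ε ((t:ℤ)+1-l-p.2) ω) 2 μ := by
      refine (memLp_two_iff_integrable_sq
        (((hmeas _).mul (hmeas _)).aestronglyMeasurable)).2 ?_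
      have h := int_mul4 hmeas hfourth ((t:ℤ)+1-k-p.1) ((t:ℤ)+1-l-p.2)
        ((t:ℤ)+1-k-p.1) ((t:ℤ)+1-l-p.2)
      have heq : (fun ω => (ε ((t:ℤ)+1-k-p.1) ω * ε ((t:ℤ)+1-l-p.2) ω)^2)
          = fun ω => ε ((t:ℤ)+1-k-p.1) ω * ε ((t:ℤ)+1-l-p.2) ω *
            (ε ((t:ℤ)+1-k-p.1) ω * ε ((t:ℤ)+1-l-p.2) ω) := funext fun ω => by ring
      show Integrable (fun ω => (ε ((t:ℤ)+1-k-p.1) ω * ε ((t:ℤ)+1-l-p.2) ω)^2) μ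
      rw [heq]; exact h
    have := hmul.sub (memLp_const (E p t))
    have heq : (fun ω => ε ((t:ℤ)+1-k-p.1) ω * ε ((t:ℤ)+1-l-p.2) ω) - (fun _ => E p t)
        = fun ω => ε ((t:ℤ)+1-k-p.1) ω * ε ((t:ℤ)+1-l-p.2) ω - E p t := rfl
    rwa [heq] at this
  have hfLp : ∀ p, MemLp (f p) 2 μ := fun p => (hgLp p).const_mul _
  -- sqrt bound
  have hsqrt : ∀ p : ℕ×ℕ, Real.sqrt (∫ ω, (f p ω)^2 ∂μ)
      ≤ |ψ p.1| * |ψ p.2| * Real.sqrt (n * m4) := by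
    intro p
    have h1 : (fun ω => (f p ω)^2) = fun ω => (ψ p.1 * ψ p.2)^2 * (g p ω)^2 :=
      funext fun ω => by simp only [hfdef]; ring
    have h2 : ∫ ω, (f p ω)^2 ∂μ ≤ (ψ p.1 * ψ p.2)^2 * (n * m4) := by
      rw [h1, integral_const_mul]
      exact mul_le_mul_of_nonneg_left (hgbound p) (sq_nonneg _)
    calc Real.sqrt (∫ ω, (f p ω)^2 ∂μ) ≤ Real.sqrt ((ψ p.1 * ψ p.2)^2 * (n * m4)) :=
        Real.sqrt_le_sqrt h2
    _ = |ψ p.1 * ψ p.2| * Real.sqrt ((n:ℝ) * m4) := by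
        rw [Real.sqrt_mul (sq_nonneg _), Real.sqrt_sq_eq_abs]
    _ = |ψ p.1| * |ψ p.2| * Real.sqrt ((n:ℝ) * m4) := by rw [abs_mul]
  -- partial sum L² bound
  have hPm : ∀ m : ℕ, ∫ ω, (∑ p ∈ Finset.range m ×ˢ Finset.range m, f p ω)^2 ∂μ
      ≤ Ψ^4 * ((n:ℝ) * m4) := by
    intro m
    refine (sq_integral_sum_le _ f hfLp).trans ?_
    have h1 : ∑ p ∈ Finset.range m ×ˢ Finset.range m, Real.sqrt (∫ ω, (f p ω)^2 ∂μ)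
        ≤ Ψ * Ψ * Real.sqrt ((n:ℝ) * m4) := by
      have hle : ∑ i ∈ Finset.range m, |ψ i| ≤ Ψ :=
        hψ.sum_le_tsum _ (fun i _ => abs_nonneg _)
      have h0 : 0 ≤ ∑ i ∈ Finset.range m, |ψ i| :=
        Finset.sum_nonneg fun i _ => abs_nonneg _
      calc ∑ p ∈ Finset.range m ×ˢ Finset.range m, Real.sqrt (∫ ω, (f p ω)^2 ∂μ)
          ≤ ∑ p ∈ Finset.range m ×ˢ Finset.range m,
            |ψ p.1| * |ψ p.2| * Real.sqrt ((n:ℝ) * m4) :=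
            Finset.sum_le_sum fun p _ => hsqrt p
        _ = (∑ i ∈ Finset.range m, |ψ i|) * (∑ j ∈ Finset.range m, |ψ j|)
            * Real.sqrt ((n:ℝ) * m4) := by
            rw [← Finset.sum_mul, Finset.sum_product]
            congr 1
            rw [Finset.sum_mul]
            exact Finset.sum_congr rfl fun i _ => by rw [Finset.mul_sum]
        _ ≤ Ψ * Ψ * Real.sqrt ((n:ℝ) * m4) := by
            have hmm : (∑ i ∈ Finset.range m, |ψ i|) * (∑ j ∈ Finset.range m, |ψ j|)
                ≤ Ψ * Ψ := mul_le_mul hle hle h0 hΨ0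
            exact mul_le_mul_of_nonneg_right hmm (Real.sqrt_nonneg _)
    have h0 : 0 ≤ ∑ p ∈ Finset.range m ×ˢ Finset.range m, Real.sqrt (∫ ω, (f p ω)^2 ∂μ) :=
      Finset.sum_nonneg fun p _ => Real.sqrt_nonneg _
    calc (∑ p ∈ Finset.range m ×ˢ Finset.range m, Real.sqrt (∫ ω, (f p ω)^2 ∂μ))^2
        ≤ (Ψ * Ψ * Real.sqrt ((n:ℝ) * m4))^2 := pow_le_pow_left₀ h0 h1 2
      _ = Ψ^4 * (Real.sqrt ((n:ℝ) * m4))^2 := by ring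
      _ = Ψ^4 * ((n:ℝ) * m4) := by
          rw [Real.sq_sqrt (mul_nonneg (Nat.cast_nonneg n) hm40)]
  -- summability of the coefficient family
  have hsumψψ : Summable (fun p : ℕ×ℕ => |ψ p.1| * |ψ p.2| * σ2) :=
    (hψ.mul_of_nonneg hψ (fun _ => abs_nonneg _) (fun _ => abs_nonneg _)).mul_right σ2
  -- decomposition of c t
  have hcrep : ∀ t : ℕ, c t = ∑' p : ℕ×ℕ, ψ p.1 * ψ p.2 * E p t := by
    intro t
    have hYY : (fun ω => Y ((t:ℤ)+1-k) ω * Y ((t:ℤ)+1-l) ω) =ᵐ[μ]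
        (fun ω => ∑' p : ℕ×ℕ, (ψ p.1 * ε ((t:ℤ)+1-k-p.1) ω)
          * (ψ p.2 * ε ((t:ℤ)+1-l-p.2) ω)) := by
      filter_upwards [hsummable] with ω hω
      rw [hY, hY]
      exact tsum_mul_tsum_of_summable_norm (hω _) (hω _)
    have hintp : ∀ p : ℕ×ℕ, Integrable (fun ω => (ψ p.1 * ε ((t:ℤ)+1-k-p.1) ω)
        * (ψ p.2 * ε ((t:ℤ)+1-l-p.2) ω)) μ := by
      intro p
      have h := ((int_mul2 hmeas hfourth ((t:ℤ)+1-k-p.1) ((t:ℤ)+1-l-p.2)).const_mul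
        (ψ p.1 * ψ p.2))
      have heq : (fun ω => ψ p.1 * ψ p.2 * (ε ((t:ℤ)+1-k-p.1) ω * ε ((t:ℤ)+1-l-p.2) ω))
          = fun ω => (ψ p.1 * ε ((t:ℤ)+1-k-p.1) ω) * (ψ p.2 * ε ((t:ℤ)+1-l-p.2) ω) :=
        funext fun ω => by ring
      rwa [heq] at h
    have habsint : ∀ p : ℕ×ℕ, ∫ ω, ‖(ψ p.1 * ε ((t:ℤ)+1-k-p.1) ω)
        * (ψ p.2 * ε ((t:ℤ)+1-l-p.2) ω)‖ ∂μ ≤ |ψ p.1| * |ψ p.2| * σ2 := by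
      intro p
      have heq : (fun ω => ‖(ψ p.1 * ε ((t:ℤ)+1-k-p.1) ω)
          * (ψ p.2 * ε ((t:ℤ)+1-l-p.2) ω)‖)
          = fun ω => (|ψ p.1| * |ψ p.2|) * |ε ((t:ℤ)+1-k-p.1) ω * ε ((t:ℤ)+1-l-p.2) ω| := by
        funext ω
        rw [Real.norm_eq_abs]
        rw [show (ψ p.1 * ε ((t:ℤ)+1-k-p.1) ω) * (ψ p.2 * ε ((t:ℤ)+1-l-p.2) ω)
          = (ψ p.1 * ψ p.2) * (ε ((t:ℤ)+1-k-p.1) ω * ε ((t:ℤ)+1-l-p.2) ω) from by ring,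
          abs_mul, abs_mul]
      rw [heq, integral_const_mul]
      exact mul_le_mul_of_nonneg_left (habs2 _ _) (by positivity)
    have hfin : ∑' p : ℕ×ℕ, ∫⁻ ω, ‖(ψ p.1 * ε ((t:ℤ)+1-k-p.1) ω)
        * (ψ p.2 * ε ((t:ℤ)+1-l-p.2) ω)‖₊ ∂μ ≠ ⊤ := by
      have hterm : ∀ p : ℕ×ℕ, ∫⁻ ω, (‖(ψ p.1 * ε ((t:ℤ)+1-k-p.1) ω)
          * (ψ p.2 * ε ((t:ℤ)+1-l-p.2) ω)‖₊ : ℝ≥0∞) ∂μ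
          ≤ ENNReal.ofReal (|ψ p.1| * |ψ p.2| * σ2) := by
        intro p
        have h1 : ∫⁻ ω, (‖(ψ p.1 * ε ((t:ℤ)+1-k-p.1) ω)
            * (ψ p.2 * ε ((t:ℤ)+1-l-p.2) ω)‖₊ : ℝ≥0∞) ∂μ
            = ENNReal.ofReal (∫ ω, ‖(ψ p.1 * ε ((t:ℤ)+1-k-p.1) ω)
              * (ψ p.2 * ε ((t:ℤ)+1-l-p.2) ω)‖ ∂μ) := by
          rw [ofReal_integral_eq_lintegral_ofReal (hintp p).norm
            (Eventually.of_forall fun ω => norm_nonneg _)]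
          simp_rw [ofReal_norm, enorm_eq_nnnorm]
        rw [h1]
        exact ENNReal.ofReal_le_ofReal (habsint p)
      refine ne_top_of_le_ne_top ?_ (ENNReal.tsum_le_tsum hterm)
      rw [← ENNReal.ofReal_tsum_of_nonneg (fun p => by positivity) hsumψψ]
      exact ENNReal.ofReal_ne_top
    have := integral_tsum (fun p : ℕ×ℕ =>
      (((hmeas _).const_mul (ψ p.1)).mul ((hmeas _).const_mul (ψ p.2))).aestronglyMeasurable)
      hfin
    simp only [Pi.mul_apply] at this
    rw [show c t = ∫ ω, Y ((t:ℤ)+1-k) ω * Y ((t:ℤ)+1-l) ω ∂μ from rfl,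
      integral_congr_ae hYY, this]
    refine tsum_congr fun p => ?_
    have heq : (fun ω => (ψ p.1 * ε ((t:ℤ)+1-k-p.1) ω) * (ψ p.2 * ε ((t:ℤ)+1-l-p.2) ω))
        = fun ω => (ψ p.1 * ψ p.2) * (ε ((t:ℤ)+1-k-p.1) ω * ε ((t:ℤ)+1-l-p.2) ω) :=
      funext fun ω => by ring
    rw [heq, integral_const_mul]
  -- summability of ψψ E
  have hsumE : ∀ t : ℕ, Summable (fun p : ℕ×ℕ => ψ p.1 * ψ p.2 * E p t) := by
    intro t
    refine Summable.of_norm_bounded hsumψψ fun p => ?_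
    rw [Real.norm_eq_abs, abs_mul, abs_mul]
    exact mul_le_mul_of_nonneg_left (habsE _ _) (by positivity)
  -- a.e. HasSum representation of S
  have haeHasSum : ∀ᵐ ω ∂μ, HasSum (fun p : ℕ×ℕ => f p ω) (S ω) := by
    filter_upwards [hsummable] with ω hω
    have hterm : ∀ t : ℕ, HasSum (fun p : ℕ×ℕ =>
        ψ p.1 * ψ p.2 * (ε ((t:ℤ)+1-k-p.1) ω * ε ((t:ℤ)+1-l-p.2) ω - E p t))
        (Y ((t:ℤ)+1-k) ω * Y ((t:ℤ)+1-l) ω - c t) := by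
      intro t
      have h1 : HasSum (fun p : ℕ×ℕ => (ψ p.1 * ε ((t:ℤ)+1-k-p.1) ω)
          * (ψ p.2 * ε ((t:ℤ)+1-l-p.2) ω))
          (Y ((t:ℤ)+1-k) ω * Y ((t:ℤ)+1-l) ω) := by
        have hs := summable_mul_of_summable_norm (hω ((t:ℤ)+1-k)) (hω ((t:ℤ)+1-l))
        have h := hs.hasSum
        rwa [← tsum_mul_tsum_of_summable_norm (hω _) (hω _), ← hY, ← hY] at h
      have h2 : HasSum (fun p : ℕ×ℕ => ψ p.1 * ψ p.2 * E p t) (c t) := by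
        rw [hcrep t]; exact (hsumE t).hasSum
      have h3 := h1.sub h2
      have heq : (fun p : ℕ×ℕ =>
          ψ p.1 * ψ p.2 * (ε ((t:ℤ)+1-k-p.1) ω * ε ((t:ℤ)+1-l-p.2) ω - E p t))
          = fun p => (ψ p.1 * ε ((t:ℤ)+1-k-p.1) ω) * (ψ p.2 * ε ((t:ℤ)+1-l-p.2) ω)
            - ψ p.1 * ψ p.2 * E p t := funext fun p => by ring
      rw [heq]; exact h3
    have hall := hasSum_sum fun t (_ : t ∈ Finset.range n) => hterm t
    have heq2 : (fun p : ℕ×ℕ => ∑ t ∈ Finset.range n,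
        ψ p.1 * ψ p.2 * (ε ((t:ℤ)+1-k-p.1) ω * ε ((t:ℤ)+1-l-p.2) ω - E p t))
        = fun p => f p ω := by
      funext p
      rw [hfdef]
      simp only [hgdef]
      rw [Finset.mul_sum]
    rwa [heq2] at hall
  -- tendsto along squares
  set P : ℕ → Ω → ℝ := fun m ω => ∑ p ∈ Finset.range m ×ˢ Finset.range m, f p ω with hPdef
  have hPmeas : ∀ m, Measurable (P m) := fun m =>
    Finset.measurable_sum _ fun p _ => hfmeas p
  have haeT : ∀ᵐ ω ∂μ, Tendsto (fun m => P m ω) atTop (nhds (S ω)) := by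
    filter_upwards [haeHasSum] with ω h
    exact h.comp tendsto_sq_finsets
  have hSmeas : AEStronglyMeasurable S μ :=
    aestronglyMeasurable_of_tendsto_ae atTop (fun m => (hPmeas m).aestronglyMeasurable) haeT
  -- Fatou
  have hlin : ∫⁻ ω, ENNReal.ofReal ((S ω)^2) ∂μ ≤ ENNReal.ofReal (Ψ^4 * ((n:ℝ) * m4)) := by
    have hmm : ∀ m, Measurable fun ω => ENNReal.ofReal ((P m ω)^2) :=
      fun m => ENNReal.measurable_ofReal.comp ((hPmeas m).pow_const 2)
    have hco : (fun ω => ENNReal.ofReal ((S ω)^2)) =ᵐ[μ]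
        fun ω => liminf (fun m => ENNReal.ofReal ((P m ω)^2)) atTop := by
      filter_upwards [haeT] with ω h
      have ht : Tendsto (fun m => ENNReal.ofReal ((P m ω)^2)) atTop
          (nhds (ENNReal.ofReal ((S ω)^2))) :=
        (ENNReal.continuous_ofReal.tendsto _).comp (((continuous_pow 2).tendsto _).comp h)
      exact ht.liminf_eq.symm
    have hb : ∀ m, ∫⁻ ω, ENNReal.ofReal ((P m ω)^2) ∂μ
        ≤ ENNReal.ofReal (Ψ^4 * ((n:ℝ) * m4)) := by
      intro m
      have hintm : Integrable (fun ω => (P m ω)^2) μ :=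
        (memLp_two_iff_integrable_sq (hPmeas m).aestronglyMeasurable).1
          (memLp_finset_sum _ fun p _ => hfLp p)
      rw [← ofReal_integral_eq_lintegral_ofReal hintm
        (Eventually.of_forall fun ω => sq_nonneg _)]
      exact ENNReal.ofReal_le_ofReal (hPm m)
    calc ∫⁻ ω, ENNReal.ofReal ((S ω)^2) ∂μ
        = ∫⁻ ω, liminf (fun m => ENNReal.ofReal ((P m ω)^2)) atTop ∂μ :=
          lintegral_congr_ae hco
      _ ≤ liminf (fun m => ∫⁻ ω, ENNReal.ofReal ((P m ω)^2) ∂μ) atTop :=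
          lintegral_liminf_le hmm
      _ ≤ ENNReal.ofReal (Ψ^4 * ((n:ℝ) * m4)) :=
          (Filter.liminf_le_limsup (by isBoundedDefault) (by isBoundedDefault)).trans
            (Filter.limsup_le_of_le (by isBoundedDefault) (Eventually.of_forall hb))
  have hS2 : ∫ ω, (S ω)^2 ∂μ ≤ Ψ^4 * ((n:ℝ) * m4) := by
    rw [integral_eq_lintegral_of_nonneg_ae (Eventually.of_forall fun ω => sq_nonneg _)
      (hSmeas.pow 2)]
    exact ENNReal.toReal_le_of_le_ofReal
      (by positivity) hlin
  -- final computation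
  have hfinal : (fun ω => ((n:ℝ)^(-(1/2):ℝ) * S ω)^2)
      = fun ω => ((n:ℝ)^(-(1/2):ℝ))^2 * (S ω)^2 := funext fun ω => by ring
  have hc2 : ((n:ℝ)^(-(1/2):ℝ))^2 = ((n:ℝ))⁻¹ := by
    rw [← Real.rpow_natCast ((n:ℝ)^(-(1/2):ℝ)) 2, ← Real.rpow_mul (Nat.cast_nonneg n)]
    norm_num
    rw [Real.rpow_neg_one]
  have hnpos : (0:ℝ) < n := by exact_mod_cast hn
  calc ∫ ω, ((n:ℝ)^(-(1/2):ℝ) * S ω)^2 ∂μ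
      = ((n:ℝ)^(-(1/2):ℝ))^2 * ∫ ω, (S ω)^2 ∂μ := by rw [hfinal, integral_const_mul]
    _ = ((n:ℝ))⁻¹ * ∫ ω, (S ω)^2 ∂μ := by rw [hc2]
    _ ≤ ((n:ℝ))⁻¹ * (Ψ^4 * ((n:ℝ) * m4)) := by
        exact mul_le_mul_of_nonneg_left hS2 (inv_nonneg.2 hnpos.le)
    _ = Ψ^4 * m4 * ((n:ℝ)⁻¹ * (n:ℝ)) := by ring
    _ = Ψ^4 * m4 := by rw [inv_mul_cancel₀ hnpos.ne']; ring

end
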